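/- (The reduced network generates the lumped Markov chain.) Let R be a reaction network over a species type S, ≈ a species equivalence for R with multiset lifting ≈ₗ, f a representative map for ≈, and R̂ the reduced network of R by f. Then for every state σ and every ≈ₗ-equivalence class M̃, it holds that q_R[σ, M̃] = q_{R̂}(f(σ), f(M̃)), where q_R denotes transition rates of the Markov chain of R and q_{R̂} those of the Markov chain of R̂ (with the convention q(θ,θ) = −∑_{θ'≠θ} q(θ,θ') in both chains). -/

import Mathlib

open Classical

noncomputable section

/-- A reaction of a stochastic mass-action network:
reagent multiset, kinetic parameter, product multiset. -/
structure Reaction (S : Type*) where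
  reag : Multiset S
  rate : ℝ
  prod : Multiset S

variable {S : Type*}

/-- `classCount sd s σ` is the cumulative multiplicity in `σ` of the species in the
≈-equivalence class of `s` (every ≈-class is of this form). -/
def classCount (sd : Setoid S) (s : S) (σ : Multiset S) : ℕ :=
  (σ.filter (sd.r s)).card

/-- The multiset lifting `≈ₗ` of an equivalence relation `≈` on species:
two multisets are related iff they have the same cumulative multiplicity
of every ≈-equivalence class. -/
def mlift (sd : Setoid S) (σ σ' : Multiset S) : Prop :=
  ∀ s : S, classCount sd s σ = classCount sd s σ'

/-- Cumulative multiplicity in `σ` of an ≈-equivalence class given as an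
element of the quotient. -/
def classCountQ (sd : Setoid S) (H : Quotient sd) (σ : Multiset S) : ℕ :=
  (σ.filter (fun x => Quotient.mk sd x = H)).card

/-- The multiset lifting is itself an equivalence relation on multisets. -/
def mliftSetoid (sd : Setoid S) : Setoid (Multiset S) :=
  ⟨mlift sd, ⟨fun _ _ => rfl, fun h s => (h s).symm, fun h1 h2 s => (h1 s).trans (h2 s)⟩⟩

/-- The set of reagent multisets of a reaction network. -/
def Reags (R : Finset (Reaction S)) : Finset (Multiset S) := R.image Reaction.reag

/-- The set of product multisets of a reaction network. -/
def Prods (R : Finset (Reaction S)) : Finset (Multiset S) := R.image Reaction.prod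

/-- Sum of the kinetic parameters of all reactions with reagents `ρ` and products `π`. -/
def rrOff (R : Finset (Reaction S)) (ρ π : Multiset S) : ℝ :=
  ∑ x ∈ R.filter (fun x => x.reag = ρ ∧ x.prod = π), x.rate

/-- The reaction rate `rr(ρ,π)`: the sum of the kinetic parameters of the reactions from
`ρ` to `π` when `ρ ≠ π`, with diagonal correction `rr(ρ,ρ) = -∑_{π' ∈ Prod(R), π' ≠ ρ} rr(ρ,π')`. -/
def rr (R : Finset (Reaction S)) (ρ π : Multiset S) : ℝ :=
  if ρ = π then -∑ π' ∈ (Prods R).erase ρ, rrOff R ρ π'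
  else rrOff R ρ π

/-- Cumulative reaction rate `rr[ρ,B] = ∑_{π ∈ B ∩ (Prod(R) ∪ {ρ})} rr(ρ,π)`. -/
def rrSet (R : Finset (Reaction S)) (ρ : Multiset S) (B : Set (Multiset S)) : ℝ :=
  ∑ π ∈ (insert ρ (Prods R)).filter (· ∈ B), rr R ρ π

/-- Mass-action propensity of a reaction in state `σ`. -/
def propensity (σ : Multiset S) (x : Reaction S) : ℝ :=
  x.rate * ∏ s ∈ x.reag.toFinset, ((σ.count s).choose (x.reag.count s) : ℝ)

/-- Sum of the propensities in `σ` of all reactions leading from state `σ` to state `θ`. -/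
def qOff (R : Finset (Reaction S)) (σ θ : Multiset S) : ℝ :=
  ∑ x ∈ R.filter (fun x => x.reag ≤ σ ∧ σ - x.reag + x.prod = θ), propensity σ x

/-- The (finitely many) states reachable from `σ` in one reaction. -/
def succs (R : Finset (Reaction S)) (σ : Multiset S) : Finset (Multiset S) :=
  (R.filter (fun x => x.reag ≤ σ)).image (fun x => σ - x.reag + x.prod)

/-- CTMC transition rate `q(σ,θ)` of the Markov chain of the network, with the
convention `q(σ,σ) = -∑_{θ ≠ σ} q(σ,θ)`. -/
def q (R : Finset (Reaction S)) (σ θ : Multiset S) : ℝ :=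
  if σ = θ then -∑ θ' ∈ (succs R σ).erase σ, qOff R σ θ'
  else qOff R σ θ

/-- Aggregate transition rate `q[σ,B] = ∑_{θ ∈ B} q(σ,θ)` (finitely many nonzero terms). -/
def qSet (R : Finset (Reaction S)) (σ : Multiset S) (B : Set (Multiset S)) : ℝ :=
  ∑ θ ∈ (insert σ (succs R σ)).filter (· ∈ B), q R σ θ

/-- All kinetic parameters of the network are positive. -/
def posRates (R : Finset (Reaction S)) : Prop := ∀ x ∈ R, 0 < x.rate

/-- Species equivalence (SE): for all related species `s ≈ s'`, every context `ρ` with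
`s+ρ` or `s'+ρ` a reagent multiset of `R`, and every ≈ₗ-class containing at least one
product multiset (represented by `π₀ ∈ Prod(R)`), the cumulative reaction rates agree. -/
def isSE (sd : Setoid S) (R : Finset (Reaction S)) : Prop :=
  ∀ s s' : S, sd.r s s' → ∀ ρ : Multiset S,
    ((s ::ₘ ρ) ∈ Reags R ∨ (s' ::ₘ ρ) ∈ Reags R) →
    ∀ π₀ ∈ Prods R,
      rrSet R (s ::ₘ ρ) {π | mlift sd π₀ π} = rrSet R (s' ::ₘ ρ) {π | mlift sd π₀ π}

/-- `f` is a representative map for the equivalence `sd`. -/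
def IsRep (sd : Setoid S) (f : S → S) : Prop :=
  (∀ s : S, sd.r (f s) s) ∧ ∀ s s' : S, sd.r s s' → f s = f s'

/-- The reduced reaction network of `R` by the representative map `f`: one reaction
`(ρ̂, β, π̂)` for each pair `(ρ̂, π̂)` with `ρ̂ ∈ Reag(R)`, `f(ρ̂) = ρ̂`, `f(π̂) = π̂` and
`β = ∑ { α | (ρ̂,α,π) ∈ R, f(π) = π̂ }` positive. -/
def reduced (R : Finset (Reaction S)) (f : S → S) : Finset (Reaction S) :=
  ((((R.image (fun x => (x.reag, x.prod.map f))).filter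
      (fun p => p.1.map f = p.1)).image
    (fun p => (⟨p.1, ∑ x ∈ R.filter (fun x => x.reag = p.1 ∧ x.prod.map f = p.2), x.rate,
      p.2⟩ : Reaction S)))).filter (fun x => 0 < x.rate)

/-- SMB-reaction rate: sum of parameters with no diagonal correction. -/
def rrSMBSet (R : Finset (Reaction S)) (ρ : Multiset S) (B : Set (Multiset S)) : ℝ :=
  ∑ π ∈ (Prods R).filter (· ∈ B), rrOff R ρ π

/-- Syntactic Markovian bisimulation. -/
def isSMB (sd : Setoid S) (R : Finset (Reaction S)) : Prop :=
  ∀ s s' : S, sd.r s s' → ∀ ρ π₀ : Multiset S,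
    rrSMBSet R (s ::ₘ ρ) {π | mlift sd π₀ π} = rrSMBSet R (s' ::ₘ ρ) {π | mlift sd π₀ π}

section Aux

variable {S : Type*}

theorem classCount_cons (sd : Setoid S) (s b : S) (σ : Multiset S) :
    classCount sd s (b ::ₘ σ) = classCount sd s σ + if sd.r s b then 1 else 0 := by
  unfold classCount
  rw [Multiset.filter_cons]
  split_ifs with h <;> simp [add_comm]

theorem rep_idem {sd : Setoid S} {f : S → S} (hf : IsRep sd f) (s : S) : f (f s) = f s :=
  hf.2 _ _ (hf.1 s)

theorem map_map_rep {sd : Setoid S} {f : S → S} (hf : IsRep sd f) (σ : Multiset S) :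
    (σ.map f).map f = σ.map f := by
  rw [Multiset.map_map]
  exact Multiset.map_congr rfl (fun x _ => rep_idem hf x)

theorem rep_r_iff {sd : Setoid S} {f : S → S} (hf : IsRep sd f) (s x : S) :
    sd.r s (f x) ↔ sd.r s x :=
  ⟨fun h => sd.iseqv.trans h (hf.1 x), fun h => sd.iseqv.trans h (sd.iseqv.symm (hf.1 x))⟩

theorem classCount_map {sd : Setoid S} {f : S → S} (hf : IsRep sd f) (s : S) (σ : Multiset S) :
    classCount sd s (σ.map f) = classCount sd s σ := by
  unfold classCount
  rw [Multiset.filter_map]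
  rw [Multiset.card_map]
  congr 1
  apply Multiset.filter_congr
  intro x _
  exact rep_r_iff hf s x

theorem mlift_iff_map {sd : Setoid S} {f : S → S} (hf : IsRep sd f) (σ σ' : Multiset S) :
    mlift sd σ σ' ↔ σ.map f = σ'.map f := by
  constructor
  · intro h
    ext r
    rw [Multiset.count_map, Multiset.count_map]
    by_cases hr : ∃ x, f x = r
    · obtain ⟨x, rfl⟩ := hr
      have hfil : ∀ τ : Multiset S, τ.filter (fun a => f x = f a) = τ.filter (sd.r x) := by
        intro τ
        apply Multiset.filter_congr
        intro a _
        constructor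
        · intro hfa
          exact sd.iseqv.trans (sd.iseqv.symm (hf.1 x)) (hfa ▸ hf.1 a)
        · intro hr; exact (hf.2 x a hr) ▸ rfl
      rw [hfil, hfil]
      exact h x
    · have hz : ∀ τ : Multiset S, τ.filter (fun a => r = f a) = 0 := by
        intro τ
        rw [Multiset.filter_eq_nil]
        intro a _ ha
        exact hr ⟨a, ha.symm⟩
      rw [hz, hz]
  · intro h s
    rw [← classCount_map hf s σ, ← classCount_map hf s σ', h]

theorem mlift.refl (sd : Setoid S) (σ : Multiset S) : mlift sd σ σ := fun _ => rfl

theorem mlift.symm {sd : Setoid S} {σ σ' : Multiset S} (h : mlift sd σ σ') : mlift sd σ' σ :=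
  fun s => (h s).symm

theorem mlift.trans {sd : Setoid S} {σ σ' σ'' : Multiset S} (h : mlift sd σ σ')
    (h' : mlift sd σ' σ'') : mlift sd σ σ'' := fun s => (h s).trans (h' s)

theorem powerset_map' {S' : Type*} (f : S → S') (σ : Multiset S) :
    (σ.map f).powerset = σ.powerset.map (Multiset.map f) := by
  induction σ using Multiset.induction with
  | empty => simp
  | cons a σ ih =>
    rw [Multiset.map_cons, Multiset.powerset_cons, Multiset.powerset_cons, ih,
      Multiset.map_add, Multiset.map_map, Multiset.map_map]
    congr 1
    apply Multiset.map_congr rfl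
    intro τ _
    simp

theorem prod_choose_subset [DecidableEq S] (σ ρ : Multiset S) {A : Finset S}
    (hA : ρ.toFinset ⊆ A) :
    ∏ s ∈ ρ.toFinset, (σ.count s).choose (ρ.count s)
      = ∏ s ∈ A, (σ.count s).choose (ρ.count s) := by
  apply Finset.prod_subset hA
  intro x _ hx
  have hc : Multiset.count x ρ = 0 :=
    Multiset.count_eq_zero_of_notMem (by simpa using hx)
  rw [hc, Nat.choose_zero_right]

theorem count_powerset [DecidableEq S] (σ : Multiset S) : ∀ ρ : Multiset S,
    σ.powerset.count ρ = ∏ s ∈ ρ.toFinset, (σ.count s).choose (ρ.count s) := by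
  induction σ using Multiset.induction with
  | empty =>
    intro ρ
    rcases eq_or_ne ρ 0 with rfl | h
    · simp
    · obtain ⟨a, ha⟩ := Multiset.exists_mem_of_ne_zero h
      rw [Multiset.powerset_zero,
        Finset.prod_eq_zero (Multiset.mem_toFinset.2 ha)
          (Nat.choose_eq_zero_of_lt (by simpa using Multiset.count_pos.mpr ha))]
      simp [Multiset.count_singleton, h]
  | cons a σ ih =>
    intro ρ
    rw [Multiset.powerset_cons, Multiset.count_add]
    by_cases ha : a ∈ ρ
    · have hk : 0 < Multiset.count a ρ := Multiset.count_pos.mpr ha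
      obtain ⟨k, hk'⟩ : ∃ k, Multiset.count a ρ = k + 1 :=
        ⟨Multiset.count a ρ - 1, (Nat.succ_pred_eq_of_pos hk).symm⟩
      have hmap : (σ.powerset.map (Multiset.cons a)).count ρ = σ.powerset.count (ρ.erase a) := by
        conv_lhs => rw [← Multiset.cons_erase ha]
        exact Multiset.count_map_eq_count' _ _ (fun s t h => (Multiset.cons_inj_right a).1 h) _
      rw [hmap, ih ρ, ih (ρ.erase a)]
      set A := insert a ρ.toFinset with hA
      have h1 : ρ.toFinset ⊆ A := Finset.subset_insert _ _
      have h2 : (ρ.erase a).toFinset ⊆ A := fun x hx =>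
        Finset.mem_insert_of_mem (Multiset.mem_toFinset.2
          (Multiset.mem_of_mem_erase (Multiset.mem_toFinset.1 hx)))
      have haA : a ∈ A := Finset.mem_insert_self _ _
      rw [prod_choose_subset σ ρ h1, prod_choose_subset σ (ρ.erase a) h2,
        prod_choose_subset (a ::ₘ σ) ρ h1,
        ← Finset.mul_prod_erase A _ haA, ← Finset.mul_prod_erase A _ haA,
        ← Finset.mul_prod_erase A _ haA]
      have e1 : ∏ s ∈ A.erase a, (Multiset.count s (a ::ₘ σ)).choose (Multiset.count s ρ)
          = ∏ s ∈ A.erase a, (Multiset.count s σ).choose (Multiset.count s ρ) :=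
        Finset.prod_congr rfl fun s hs => by
          rw [Multiset.count_cons_of_ne (Finset.ne_of_mem_erase hs)]
      have e2 : ∏ s ∈ A.erase a, (Multiset.count s σ).choose (Multiset.count s (ρ.erase a))
          = ∏ s ∈ A.erase a, (Multiset.count s σ).choose (Multiset.count s ρ) :=
        Finset.prod_congr rfl fun s hs => by
          rw [Multiset.count_erase_of_ne (Finset.ne_of_mem_erase hs)]
      rw [e1, e2, Multiset.count_cons_self, Multiset.count_erase_self, hk']
      rw [Nat.succ_sub_one, Nat.choose_succ_succ']
      ring
    · have hmap : (σ.powerset.map (Multiset.cons a)).count ρ = 0 := by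
        rw [Multiset.count_eq_zero]
        intro hmem
        obtain ⟨τ, _, rfl⟩ := Multiset.mem_map.1 hmem
        exact ha (Multiset.mem_cons_self a τ)
      rw [hmap, ih ρ, Nat.add_zero]
      exact Finset.prod_congr rfl fun s hs => by
        rw [Multiset.count_cons_of_ne (fun h => ha (by rw [← h]; exact Multiset.mem_toFinset.1 hs))]

theorem mlift_iff_of_fixed {sd : Setoid S} {f : S → S} (hf : IsRep sd f) {piX : Multiset S}
    (hfix : piX.map f = piX) (τ : Multiset S) : mlift sd piX τ ↔ τ.map f = piX := by
  rw [mlift_iff_map hf, hfix, eq_comm]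

/-- One-step swap of equivalent species. -/
def Step (sd : Setoid S) (σ τ : Multiset S) : Prop :=
  ∃ s s' μ, sd.r s s' ∧ σ = s ::ₘ μ ∧ τ = s' ::ₘ μ

theorem classCount_pos {sd : Setoid S} {a : S} {ρ : Multiset S} (ha : a ∈ ρ) :
    0 < classCount sd a ρ := by
  unfold classCount
  rw [Multiset.card_pos]
  intro h0
  have : a ∈ Multiset.filter (sd.r a) ρ := Multiset.mem_filter.2 ⟨ha, sd.iseqv.refl a⟩
  rw [h0] at this
  exact absurd this (Multiset.notMem_zero a)

theorem mlift_chain (sd : Setoid S) : ∀ (n : ℕ) (ρ ρ' : Multiset S), Multiset.card ρ = n →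
    mlift sd ρ ρ' → Relation.ReflTransGen (Step sd) ρ ρ' := by
  intro n
  induction n with
  | zero =>
    intro ρ ρ' hc h
    obtain rfl : ρ = 0 := Multiset.card_eq_zero.1 hc
    have : ρ' = 0 := by
      by_contra h0
      obtain ⟨a, ha⟩ := Multiset.exists_mem_of_ne_zero h0
      have h1 := classCount_pos (sd := sd) ha
      rw [← h a] at h1
      simp [classCount] at h1
    rw [this]
  | succ n IH =>
    intro ρ ρ' hc h
    obtain ⟨a, ha⟩ : ∃ a, a ∈ ρ := Multiset.exists_mem_of_ne_zero
      (by intro h0; rw [h0] at hc; simp at hc)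
    have hpos' : 0 < classCount sd a ρ' := by rw [← h a]; exact classCount_pos ha
    have : ∃ a', a' ∈ Multiset.filter (sd.r a) ρ' := by
      rw [← Multiset.card_pos_iff_exists_mem]
      exact hpos'
    obtain ⟨a', ha'mem⟩ := this
    obtain ⟨ha', haa'⟩ := Multiset.mem_filter.1 ha'mem
    obtain ⟨τ, rfl⟩ := Multiset.exists_cons_of_mem ha
    obtain ⟨τ', rfl⟩ := Multiset.exists_cons_of_mem ha'
    have hsw : mlift sd (a ::ₘ τ') (a' ::ₘ τ') := by
      intro s
      rw [classCount_cons, classCount_cons]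
      have hiff : sd.r s a ↔ sd.r s a' :=
        ⟨fun h2 => sd.iseqv.trans h2 haa', fun h2 => sd.iseqv.trans h2 (sd.iseqv.symm haa')⟩
      simp [hiff]
    have hττ' : mlift sd τ τ' := by
      intro s
      have h2 := (mlift.trans h (mlift.symm hsw)) s
      rw [classCount_cons, classCount_cons] at h2
      exact Nat.add_right_cancel h2
    have hchain := IH τ τ' (by simpa using hc) hττ'
    have hlift : Relation.ReflTransGen (Step sd) (a ::ₘ τ) (a ::ₘ τ') :=
      Relation.ReflTransGen.lift (fun μ => a ::ₘ μ)
        (fun x y ⟨s, s', μ, h1, h2, h3⟩ =>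
          ⟨s, s', a ::ₘ μ, h1, by rw [h2, Multiset.cons_swap], by rw [h3, Multiset.cons_swap]⟩)
        _ _ hchain
    exact hlift.tail ⟨a, a', τ', haa', rfl, rfl⟩

theorem rrOff_eq_zero {R : Finset (Reaction S)} {ρ : Multiset S} (h : ρ ∉ Reags R)
    (π : Multiset S) : rrOff R ρ π = 0 :=
  Finset.sum_eq_zero fun x hx =>
    absurd (Finset.mem_image.2 ⟨x, (Finset.mem_filter.1 hx).1, (Finset.mem_filter.1 hx).2.1⟩) h

theorem rrSet_eq_zero {R : Finset (Reaction S)} {ρ : Multiset S} (h : ρ ∉ Reags R)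
    (B : Set (Multiset S)) : rrSet R ρ B = 0 :=
  Finset.sum_eq_zero fun π _ => by
    unfold rr
    split_ifs
    · rw [neg_eq_zero]
      exact Finset.sum_eq_zero fun π' _ => rrOff_eq_zero h π'
    · exact rrOff_eq_zero h π

theorem rrSet_const {sd : Setoid S} {R : Finset (Reaction S)} (hse : isSE sd R)
    {π₀ : Multiset S} (hπ₀ : π₀ ∈ Prods R) {ρ ρ' : Multiset S} (h : mlift sd ρ ρ') :
    rrSet R ρ {π | mlift sd π₀ π} = rrSet R ρ' {π | mlift sd π₀ π} := by
  have hchain := mlift_chain sd _ ρ ρ' rfl h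
  clear h
  induction hchain with
  | refl => rfl
  | tail _ hbc ih =>
    refine ih.trans ?_
    obtain ⟨s, s', μ, hss', rfl, rfl⟩ := hbc
    by_cases hR : (s ::ₘ μ) ∈ Reags R ∨ (s' ::ₘ μ) ∈ Reags R
    · exact hse s s' hss' μ hR π₀ hπ₀
    · push_neg at hR
      rw [rrSet_eq_zero hR.1, rrSet_eq_zero hR.2]
theorem rrSet_eq_sum (R : Finset (Reaction S)) {sd : Setoid S} {π₀ ρ : Multiset S}
    (hρ : ¬ mlift sd π₀ ρ) :
    rrSet R ρ {π | mlift sd π₀ π}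
      = ∑ π ∈ (Prods R).filter (· ∈ {π : Multiset S | mlift sd π₀ π}), rrOff R ρ π := by
  unfold rrSet
  rw [Finset.filter_insert, if_neg (show ρ ∉ {π : Multiset S | mlift sd π₀ π} from hρ)]
  apply Finset.sum_congr rfl
  intro π hπ
  obtain ⟨hπP, hπB⟩ := Finset.mem_filter.1 hπ
  unfold rr
  rw [if_neg]
  intro hrπ
  exact hρ (by rw [hrπ]; exact hπB)

theorem w_const {sd : Setoid S} {R : Finset (Reaction S)} (hse : isSE sd R) {f : S → S}
    (hf : IsRep sd f) {piX ρ ρ' : Multiset S} (hfix : piX.map f = piX)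
    (hρρ' : mlift sd ρ ρ') (h1 : ¬ mlift sd piX ρ) (h2 : ¬ mlift sd piX ρ') :
    ∑ x ∈ R.filter (fun x => x.reag = ρ ∧ x.prod.map f = piX), x.rate
      = ∑ x ∈ R.filter (fun x => x.reag = ρ' ∧ x.prod.map f = piX), x.rate := by
  by_cases hex : ∃ π ∈ Prods R, mlift sd piX π
  · obtain ⟨π₀, hπ₀, hm⟩ := hex
    have key : ∀ τ, ¬ mlift sd piX τ →
        ∑ x ∈ R.filter (fun x => x.reag = τ ∧ x.prod.map f = piX), x.rate
          = rrSet R τ {π | mlift sd π₀ π} := by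
      intro τ hτ
      rw [rrSet_eq_sum R (fun hc => hτ (mlift.trans hm hc))]
      have hrr : ∀ π : Multiset S, rrOff R τ π
          = ∑ x ∈ (R.filter (fun x => x.reag = τ)).filter (fun x => x.prod = π), x.rate := by
        intro π; unfold rrOff; rw [Finset.filter_filter]
      rw [Finset.sum_congr rfl fun π _ => hrr π,
        Finset.sum_fiberwise_eq_sum_filter (R.filter (fun x => x.reag = τ))
          ((Prods R).filter (· ∈ {π : Multiset S | mlift sd π₀ π})) Reaction.prod Reaction.rate,
        Finset.filter_filter]
      apply Finset.sum_congr _ (fun _ _ => rfl)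
      apply Finset.filter_congr
      intro x hx
      simp only [Finset.mem_filter, Set.mem_setOf_eq]
      constructor
      · rintro ⟨hr, hp⟩
        exact ⟨hr, Finset.mem_image.2 ⟨x, hx, rfl⟩,
          mlift.trans (mlift.symm hm) ((mlift_iff_of_fixed hf hfix _).2 hp)⟩
      · rintro ⟨hr, _, hp⟩
        exact ⟨hr, (mlift_iff_of_fixed hf hfix _).1 (mlift.trans hm hp)⟩
    rw [key ρ h1, key ρ' h2, rrSet_const hse hπ₀ hρρ']
  · have hempty : ∀ τ : Multiset S,
        R.filter (fun x => x.reag = τ ∧ x.prod.map f = piX) = ∅ := by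
      intro τ
      rw [Finset.filter_eq_empty_iff]
      rintro x hx ⟨_, hp⟩
      exact hex ⟨x.prod, Finset.mem_image.2 ⟨x, hx, rfl⟩, (mlift_iff_of_fixed hf hfix _).2 hp⟩
    simp [hempty ρ, hempty ρ']

theorem card_filter_eq_sum {β : Type*} [DecidableEq β] (s : Multiset β) (p : β → Prop)
    [DecidablePred p] :
    Multiset.card (s.filter p) = ∑ a ∈ s.toFinset.filter p, s.count a := by
  rw [← Multiset.toFinset_sum_count_eq (s.filter p), Multiset.toFinset_filter]
  apply Finset.sum_congr rfl
  intro a ha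
  exact Multiset.count_filter_of_pos (Finset.mem_filter.1 ha).2

theorem sum_count_powerset [DecidableEq S] (f : S → S) (σ : Multiset S) (rhoX : Multiset S) :
    ∑ ρ ∈ σ.powerset.toFinset.filter (fun ρ => ρ.map f = rhoX), σ.powerset.count ρ
      = (σ.map f).powerset.count rhoX := by
  rw [powerset_map', Multiset.count_map, card_filter_eq_sum]
  apply Finset.sum_congr _ (fun _ _ => rfl)
  apply Finset.filter_congr
  intro ρ _
  exact ⟨fun h => h.symm, fun h => h.symm⟩

theorem propensity_eq (σ : Multiset S) (x : Reaction S) :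
    propensity σ x = x.rate * (σ.powerset.count x.reag : ℝ) := by
  unfold propensity
  rw [count_powerset]
  push_cast
  rfl

theorem propensity_zero {σ : Multiset S} {x : Reaction S}
    (h : ¬ x.reag ≤ σ) : propensity σ x = 0 := by
  rw [propensity_eq, Multiset.count_eq_zero.2 (fun hc => h (Multiset.mem_powerset.1 hc)),
    Nat.cast_zero, mul_zero]

theorem map_sub_add (f : S → S) {ρ σ : Multiset S} (π : Multiset S) (h : ρ ≤ σ) :
    (σ - ρ + π).map f = σ.map f - ρ.map f + π.map f := by
  obtain ⟨δ, rfl⟩ : ∃ δ, σ = ρ + δ := le_iff_exists_add.1 h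
  rw [add_tsub_cancel_left, Multiset.map_add, Multiset.map_add, add_tsub_cancel_left]
theorem qSet_off {sd : Setoid S} (R : Finset (Reaction S)) {σ π₀ : Multiset S}
    (hσ : ¬ mlift sd π₀ σ) :
    qSet R σ {θ | mlift sd π₀ θ}
      = ∑ x ∈ R.filter (fun x => x.reag ≤ σ ∧ mlift sd π₀ (σ - x.reag + x.prod)),
          propensity σ x := by
  unfold qSet
  rw [Finset.filter_insert, if_neg (show σ ∉ {θ : Multiset S | mlift sd π₀ θ} from hσ)]
  have hq : ∀ θ ∈ (succs R σ).filter (· ∈ {θ : Multiset S | mlift sd π₀ θ}),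
      q R σ θ = qOff R σ θ := by
    intro θ hθ
    obtain ⟨_, hθB⟩ := Finset.mem_filter.1 hθ
    unfold q
    rw [if_neg]
    intro h
    exact hσ (by rw [h]; exact hθB)
  rw [Finset.sum_congr rfl hq]
  unfold qOff
  have h2 : ∀ θ : Multiset S, R.filter (fun x => x.reag ≤ σ ∧ σ - x.reag + x.prod = θ)
      = (R.filter (fun x => x.reag ≤ σ)).filter (fun x => σ - x.reag + x.prod = θ) := by
    intro θ; rw [Finset.filter_filter]
  rw [Finset.sum_congr rfl (fun θ _ => by rw [h2 θ]),
    Finset.sum_fiberwise_eq_sum_filter (R.filter (fun x => x.reag ≤ σ))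
      ((succs R σ).filter (· ∈ {θ : Multiset S | mlift sd π₀ θ}))
      (fun x => σ - x.reag + x.prod) (propensity σ),
    Finset.filter_filter]
  apply Finset.sum_congr _ (fun _ _ => rfl)
  apply Finset.filter_congr
  intro x hx
  simp only [Finset.mem_filter, Set.mem_setOf_eq]
  constructor
  · rintro ⟨hle, _, hm⟩
    exact ⟨hle, hm⟩
  · rintro ⟨hle, hm⟩
    exact ⟨hle, Finset.mem_image.2 ⟨x, Finset.mem_filter.2 ⟨hx, hle⟩, rfl⟩, hm⟩
theorem fiber_eq {sd : Setoid S} {R : Finset (Reaction S)} (hse : isSE sd R) {f : S → S}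
    (hf : IsRep sd f) (σ : Multiset S) {p : Multiset S × Multiset S}
    (hp1 : p.1.map f = p.1) (hp2 : p.2.map f = p.2) (hne : ¬ mlift sd p.2 p.1) :
    ∑ x ∈ R.filter (fun x => (x.reag.map f, x.prod.map f) = p), propensity σ x
      = (∑ x ∈ R.filter (fun x => x.reag = p.1 ∧ x.prod.map f = p.2), x.rate)
          * ((σ.map f).powerset.count p.1 : ℝ) := by
  set s := R.filter (fun x => (x.reag.map f, x.prod.map f) = p) with hs
  set u := σ.powerset.toFinset.filter (fun ρ => ρ.map f = p.1) with hu
  have hψ : ∀ x ∈ s, x.reag.map f = p.1 ∧ x.prod.map f = p.2 := by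
    intro x hx
    have h := (Finset.mem_filter.1 hx).2
    exact ⟨congrArg Prod.fst h, congrArg Prod.snd h⟩
  have step1 : ∑ x ∈ s, propensity σ x
      = ∑ x ∈ s.filter (fun x => x.reag ≤ σ), propensity σ x := by
    rw [← Finset.sum_filter_add_sum_filter_not s (fun x => x.reag ≤ σ) (propensity σ),
      Finset.sum_eq_zero (fun x hx => propensity_zero (Finset.mem_filter.1 hx).2), add_zero]
  have step2 : s.filter (fun x => x.reag ≤ σ) = s.filter (fun x => x.reag ∈ u) := by
    apply Finset.filter_congr
    intro x hx
    rw [hu]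
    simp only [Finset.mem_filter, Multiset.mem_toFinset, Multiset.mem_powerset]
    exact ⟨fun h => ⟨h, (hψ x hx).1⟩, fun h => h.1⟩
  have step3 : ∀ ρ ∈ u, ∑ x ∈ s.filter (fun x => x.reag = ρ), propensity σ x
      = (∑ x ∈ R.filter (fun x => x.reag = p.1 ∧ x.prod.map f = p.2), x.rate)
        * (σ.powerset.count ρ : ℝ) := by
    intro ρ hρ
    obtain ⟨hρpow, hρf⟩ : ρ ∈ σ.powerset.toFinset ∧ ρ.map f = p.1 := Finset.mem_filter.1 hρ
    have hmρ : mlift sd ρ p.1 := (mlift_iff_map hf _ _).2 (by rw [hρf, hp1])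
    have hfil : s.filter (fun x => x.reag = ρ)
        = R.filter (fun x => x.reag = ρ ∧ x.prod.map f = p.2) := by
      rw [hs, Finset.filter_filter]
      apply Finset.filter_congr
      intro x _
      constructor
      · rintro ⟨hpp, hr⟩
        exact ⟨hr, congrArg Prod.snd hpp⟩
      · rintro ⟨hr, hp⟩
        refine ⟨?_, hr⟩
        rw [Prod.ext_iff]
        exact ⟨by rw [hr, hρf], hp⟩
    rw [hfil]
    have hterm : ∀ x ∈ R.filter (fun x => x.reag = ρ ∧ x.prod.map f = p.2),
        propensity σ x = x.rate * (σ.powerset.count ρ : ℝ) := by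
      intro x hx
      rw [propensity_eq, (Finset.mem_filter.1 hx).2.1]
    rw [Finset.sum_congr rfl hterm, ← Finset.sum_mul]
    congr 1
    apply w_const hse hf hp2 hmρ
    · intro hc
      exact hne (mlift.trans hc hmρ)
    · exact hne
  calc ∑ x ∈ s, propensity σ x
      = ∑ x ∈ s.filter (fun x => x.reag ∈ u), propensity σ x := by rw [step1, step2]
    _ = ∑ ρ ∈ u, ∑ x ∈ s.filter (fun x => x.reag = ρ), propensity σ x :=
        (Finset.sum_fiberwise_eq_sum_filter s u Reaction.reag (propensity σ)).symm
    _ = ∑ ρ ∈ u, (∑ x ∈ R.filter (fun x => x.reag = p.1 ∧ x.prod.map f = p.2), x.rate)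
          * (σ.powerset.count ρ : ℝ) := Finset.sum_congr rfl step3
    _ = _ := by
        rw [← Finset.mul_sum]
        congr 1
        rw [hu, ← Nat.cast_sum, sum_count_powerset]
theorem starA {sd : Setoid S} {R : Finset (Reaction S)} (hpos : posRates R) (hse : isSE sd R)
    {f : S → S} (hf : IsRep sd f) {σ π₀ : Multiset S} (hσ : ¬ mlift sd π₀ σ) :
    qSet R σ {θ | mlift sd π₀ θ} = qOff (reduced R f) (σ.map f) (π₀.map f) := by
  have hneq : σ.map f ≠ π₀.map f := fun h => hσ ((mlift_iff_map hf _ _).2 h.symm)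
  rw [qSet_off R hσ]
  have hcond : R.filter (fun x => x.reag ≤ σ ∧ mlift sd π₀ (σ - x.reag + x.prod))
      = R.filter (fun x => x.reag ≤ σ ∧
          σ.map f - x.reag.map f + x.prod.map f = π₀.map f) := by
    apply Finset.filter_congr
    intro x _
    constructor
    · rintro ⟨hle, hm⟩
      refine ⟨hle, ?_⟩
      have h := (mlift_iff_map hf _ _).1 hm
      rw [map_sub_add f _ hle] at h
      exact h.symm
    · rintro ⟨hle, hm⟩
      refine ⟨hle, (mlift_iff_map hf _ _).2 ?_⟩
      rw [map_sub_add f _ hle, hm]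
  rw [hcond]
  set t := ((R.image (fun x => (x.reag.map f, x.prod.map f))).filter
      (fun p => p.1 ≤ σ.map f ∧ σ.map f - p.1 + p.2 = π₀.map f)) with ht
  -- facts about members of t
  have htmem : ∀ p ∈ t, p.1.map f = p.1 ∧ p.2.map f = p.2 ∧ p.1 ≤ σ.map f ∧
      σ.map f - p.1 + p.2 = π₀.map f ∧ ¬ mlift sd p.2 p.1 := by
    intro p hp
    rw [ht] at hp
    obtain ⟨hpim, hple, hpeq⟩ := Finset.mem_filter.1 hp
    obtain ⟨y, _, rfl⟩ := Finset.mem_image.1 hpim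
    refine ⟨map_map_rep hf _, map_map_rep hf _, hple, hpeq, ?_⟩
    intro hm
    have h12 : (y.reag.map f, y.prod.map f).2 = (y.reag.map f, y.prod.map f).1 := by
      have := (mlift_iff_map hf _ _).1 hm
      rw [map_map_rep hf, map_map_rep hf] at this
      exact this
    rw [h12, tsub_add_cancel_of_le hple] at hpeq
    exact hneq hpeq
  -- LHS = sum over fibers indexed by t
  have hLHS : ∑ x ∈ R.filter (fun x => x.reag ≤ σ ∧
        σ.map f - x.reag.map f + x.prod.map f = π₀.map f), propensity σ x
      = ∑ p ∈ t, ∑ x ∈ R.filter (fun x => (x.reag.map f, x.prod.map f) = p),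
          propensity σ x := by
    rw [Finset.sum_fiberwise_eq_sum_filter R t
      (fun x => (x.reag.map f, x.prod.map f)) (propensity σ)]
    apply Finset.sum_subset
    · intro x hx
      obtain ⟨hxR, hle, hm⟩ := Finset.mem_filter.1 hx
      refine Finset.mem_filter.2 ⟨hxR, ?_⟩
      rw [ht]
      exact Finset.mem_filter.2 ⟨Finset.mem_image.2 ⟨x, hxR, rfl⟩,
        Multiset.map_le_map hle, hm⟩
    · intro x hx hxn
      obtain ⟨hxR, hxt⟩ := Finset.mem_filter.1 hx
      rw [ht] at hxt
      have hm := (Finset.mem_filter.1 hxt).2.2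
      apply propensity_zero
      intro hle
      exact hxn (Finset.mem_filter.2 ⟨hxR, hle, hm⟩)
  rw [hLHS, Finset.sum_congr rfl (fun p hp => fiber_eq hse hf σ (htmem p hp).1
    (htmem p hp).2.1 (htmem p hp).2.2.2.2)]
  -- Now the RHS
  unfold qOff reduced
  rw [Finset.filter_filter, Finset.filter_image]
  rw [Finset.sum_image (fun p _ q _ h =>
    Prod.ext (congrArg Reaction.reag h) (congrArg Reaction.prod h))]
  have hprop : ∀ p : Multiset S × Multiset S,
      propensity (σ.map f) (⟨p.1, ∑ x ∈ R.filter
          (fun x => x.reag = p.1 ∧ x.prod.map f = p.2), x.rate, p.2⟩ : Reaction S)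
        = (∑ x ∈ R.filter (fun x => x.reag = p.1 ∧ x.prod.map f = p.2), x.rate)
          * (((σ.map f).powerset.count p.1 : ℝ)) := fun p => propensity_eq _ _
  rw [Finset.sum_congr rfl (fun p _ => hprop p)]
  refine (Finset.sum_subset ?_ ?_).symm
  · -- reduced pairs ⊆ t
    intro p hp
    rw [Finset.mem_filter] at hp
    obtain ⟨hpairs, hE⟩ := hp
    rw [Finset.mem_filter] at hpairs
    obtain ⟨hpim, hfix⟩ := hpairs
    obtain ⟨y, hyR, hy⟩ := Finset.mem_image.1 hpim
    have h1 : y.reag = p.1 := congrArg Prod.fst hy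
    have h2 : y.prod.map f = p.2 := congrArg Prod.snd hy
    rw [ht, Finset.mem_filter]
    refine ⟨Finset.mem_image.2 ⟨y, hyR, ?_⟩, hE.2.1, hE.2.2⟩
    rw [Prod.ext_iff]
    exact ⟨by rw [h1]; exact hfix, h2⟩
  · -- members of t with no reduced reaction have zero weight
    intro p hpt hpn
    have hm := htmem p hpt
    by_cases hβ : (∑ x ∈ R.filter (fun x => x.reag = p.1 ∧ x.prod.map f = p.2), x.rate) = 0
    · rw [hβ, zero_mul]
    · exfalso
      have hβnn : (0:ℝ) ≤ ∑ x ∈ R.filter (fun x => x.reag = p.1 ∧ x.prod.map f = p.2), x.rate :=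
        Finset.sum_nonneg fun x hx => (hpos x (Finset.mem_filter.1 hx).1).le
      have hβpos : (0:ℝ) < ∑ x ∈ R.filter (fun x => x.reag = p.1 ∧ x.prod.map f = p.2), x.rate :=
        lt_of_le_of_ne hβnn (Ne.symm hβ)
      obtain ⟨y, hy⟩ := Finset.nonempty_of_sum_ne_zero hβ
      rw [Finset.mem_filter] at hy
      obtain ⟨hyR, hy1, hy2⟩ := hy
      apply hpn
      rw [Finset.mem_filter]
      constructor
      · rw [Finset.mem_filter]
        refine ⟨Finset.mem_image.2 ⟨y, hyR, ?_⟩, hm.1⟩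
        rw [Prod.ext_iff]
        exact ⟨hy1, hy2⟩
      · exact ⟨hβpos, hm.2.2.1, hm.2.2.2.1⟩
theorem map_fixed_of_le {sd : Setoid S} {f : S → S} (hf : IsRep sd f) {σ τ : Multiset S}
    (h : τ ≤ σ.map f) : τ.map f = τ := by
  have hall : ∀ a ∈ τ, f a = a := by
    intro a ha
    obtain ⟨s, _, rfl⟩ := Multiset.mem_map.1 (Multiset.mem_of_le h ha)
    exact rep_idem hf s
  calc τ.map f = τ.map id := Multiset.map_congr rfl hall
  _ = τ := Multiset.map_id τ

theorem succs_reduced_fixed {sd : Setoid S} {f : S → S} (hf : IsRep sd f)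
    {R : Finset (Reaction S)} {σ θ : Multiset S}
    (h : θ ∈ succs (reduced R f) (σ.map f)) : θ.map f = θ := by
  obtain ⟨x, hx, rfl⟩ := Finset.mem_image.1 h
  obtain ⟨hxR, _⟩ := Finset.mem_filter.1 hx
  have hprod : x.prod.map f = x.prod := by
    obtain ⟨hxim, _⟩ := Finset.mem_filter.1 hxR
    obtain ⟨p, hp, rfl⟩ := Finset.mem_image.1 hxim
    obtain ⟨hpim, _⟩ := Finset.mem_filter.1 hp
    obtain ⟨y, _, rfl⟩ := Finset.mem_image.1 hpim
    exact map_map_rep hf _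
  rw [Multiset.map_add, map_fixed_of_le hf (tsub_le_self), hprod]

theorem qOff_not_succs {R : Finset (Reaction S)} {σ θ : Multiset S} (h : θ ∉ succs R σ) :
    qOff R σ θ = 0 := by
  apply Finset.sum_eq_zero
  intro x hx
  obtain ⟨hxR, h1, h2⟩ := Finset.mem_filter.1 hx
  exact (h (Finset.mem_image.2 ⟨x, Finset.mem_filter.2 ⟨hxR, h1⟩, h2⟩)).elim

theorem qSet_states {sd : Setoid S} (R : Finset (Reaction S)) {σ π₀ : Multiset S}
    (hσ : ¬ mlift sd π₀ σ) :
    qSet R σ {θ | mlift sd π₀ θ}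
      = ∑ θ ∈ (succs R σ).filter (· ∈ {θ : Multiset S | mlift sd π₀ θ}), qOff R σ θ := by
  unfold qSet
  rw [Finset.filter_insert, if_neg (show σ ∉ {θ : Multiset S | mlift sd π₀ θ} from hσ)]
  apply Finset.sum_congr rfl
  intro θ hθ
  obtain ⟨_, hθB⟩ := Finset.mem_filter.1 hθ
  unfold q
  rw [if_neg]
  intro h
  exact hσ (by rw [h]; exact hθB)

end Aux
/-- the reduced network generates the lumped Markov chain: for a species
equivalence `sd`, a representative map `f` and the reduced network `R̂`, for every state `σ`
and every ≈ₗ-class `M̃` (represented by `π₀`), `q_R[σ, M̃] = q_R̂(f(σ), f(M̃))`. -/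
theorem qSet_eq_q_reduced (sd : Setoid S) (R : Finset (Reaction S)) (hpos : posRates R)
    (hse : isSE sd R) (f : S → S) (hf : IsRep sd f) :
    ∀ σ π₀ : Multiset S,
      qSet R σ {θ | mlift sd π₀ θ} = q (reduced R f) (σ.map f) (π₀.map f) := by
  intro σ π₀
  by_cases hσ : mlift sd π₀ σ
  · -- diagonal case: σ itself belongs to the class
    have hMeq : π₀.map f = σ.map f := (mlift_iff_map hf _ _).1 hσ
    -- the key identity for the "outflow" sums
    have key : ∑ θ ∈ ((succs R σ).erase σ).filter
          (fun θ => ¬ θ ∈ {θ : Multiset S | mlift sd π₀ θ}), qOff R σ θ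
        = ∑ θ' ∈ (succs (reduced R f) (σ.map f)).erase (σ.map f),
            qOff (reduced R f) (σ.map f) θ' := by
      have e1 : ((succs R σ).erase σ).filter
            (fun θ => ¬ θ ∈ {θ : Multiset S | mlift sd π₀ θ})
          = (succs R σ).filter (fun θ => θ.map f ≠ σ.map f) := by
        rw [Finset.filter_erase]
        rw [show (succs R σ).filter (fun θ => ¬ θ ∈ {θ : Multiset S | mlift sd π₀ θ})
            = (succs R σ).filter (fun θ => θ.map f ≠ σ.map f) from Finset.filter_congr ?_]
        · apply Finset.erase_eq_of_notMem
          intro hc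
          exact (Finset.mem_filter.1 hc).2 rfl
        · intro θ _
          simp only [Set.mem_setOf_eq]
          constructor
          · intro hn heq
            exact hn ((mlift_iff_map hf _ _).2 (by rw [hMeq, heq]))
          · intro hn hm
            exact hn (((mlift_iff_map hf _ _).1 hm).symm.trans hMeq)
      rw [e1]
      set T := ((succs R σ).image (Multiset.map f)).erase (σ.map f) with hT
      have hTfix : ∀ θh ∈ T, θh.map f = θh ∧ ¬ mlift sd θh σ := by
        intro θh hθh
        obtain ⟨hne, himg⟩ := Finset.mem_erase.1 hθh
        obtain ⟨θ, _, rfl⟩ := Finset.mem_image.1 himg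
        refine ⟨map_map_rep hf θ, fun hm => hne ?_⟩
        rw [← (mlift_iff_map hf _ _).1 hm, map_map_rep hf θ]
      have e2 : (succs R σ).filter (fun θ => θ.map f ≠ σ.map f)
          = (succs R σ).filter (fun θ => θ.map f ∈ T) := by
        apply Finset.filter_congr
        intro θ hθ
        rw [hT]
        constructor
        · intro hne
          exact Finset.mem_erase.2 ⟨hne, Finset.mem_image.2 ⟨θ, hθ, rfl⟩⟩
        · intro hmem
          exact (Finset.mem_erase.1 hmem).1
      rw [e2, ← Finset.sum_fiberwise_eq_sum_filter (succs R σ) T (Multiset.map f) (qOff R σ)]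
      have e3 : ∀ θh ∈ T, ∑ θ ∈ (succs R σ).filter (fun θ => θ.map f = θh), qOff R σ θ
          = qOff (reduced R f) (σ.map f) θh := by
        intro θh hθh
        obtain ⟨hfix, hnm⟩ := hTfix θh hθh
        have h4 := starA hpos hse hf hnm
        rw [hfix] at h4
        rw [← h4, qSet_states R hnm]
        refine (Finset.sum_congr (Finset.filter_congr ?_) (fun _ _ => rfl)).symm
        intro θ _
        simp only [Set.mem_setOf_eq]
        exact mlift_iff_of_fixed hf hfix θ
      rw [Finset.sum_congr rfl e3]
      -- compare the two index sets
      set T' := (succs (reduced R f) (σ.map f)).erase (σ.map f) with hT'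
      have z1 : ∀ θh ∈ T ∪ T', θh ∉ T → qOff (reduced R f) (σ.map f) θh = 0 := by
        intro θh hmem hnT
        have hT'mem : θh ∈ T' := (Finset.mem_union.1 hmem).resolve_left hnT
        obtain ⟨hne, hsucc⟩ := Finset.mem_erase.1 hT'mem
        have hfix : θh.map f = θh := succs_reduced_fixed hf hsucc
        have hnm : ¬ mlift sd θh σ := fun hm =>
          hne (((mlift_iff_map hf _ _).1 hm).symm.trans hfix).symm
        have h4 := starA hpos hse hf hnm
        rw [hfix] at h4
        rw [← h4, qSet_states R hnm]
        rw [show (succs R σ).filter (· ∈ {θ : Multiset S | mlift sd θh θ}) = ∅ from ?_,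
          Finset.sum_empty]
        rw [Finset.filter_eq_empty_iff]
        intro θ hθ hB
        apply hnT
        rw [hT]
        refine Finset.mem_erase.2 ⟨hne, ?_⟩
        have : θ.map f = θh := (mlift_iff_of_fixed hf hfix θ).1 hB
        exact Finset.mem_image.2 ⟨θ, hθ, this⟩
      have z2 : ∀ θh ∈ T ∪ T', θh ∉ T' → qOff (reduced R f) (σ.map f) θh = 0 := by
        intro θh hmem hnT'
        have hTmem : θh ∈ T := (Finset.mem_union.1 hmem).resolve_right hnT'
        have hne := (Finset.mem_erase.1 hTmem).1
        apply qOff_not_succs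
        intro hsucc
        exact hnT' (Finset.mem_erase.2 ⟨hne, hsucc⟩)
      calc ∑ θh ∈ T, qOff (reduced R f) (σ.map f) θh
          = ∑ θh ∈ T ∪ T', qOff (reduced R f) (σ.map f) θh :=
            Finset.sum_subset Finset.subset_union_left z1
        _ = ∑ θh ∈ T', qOff (reduced R f) (σ.map f) θh :=
            (Finset.sum_subset Finset.subset_union_right z2).symm
    -- assemble the diagonal case
    unfold qSet
    rw [Finset.filter_insert, if_pos (show σ ∈ {θ : Multiset S | mlift sd π₀ θ} from hσ)]
    rw [← Finset.add_sum_erase _ (q R σ) (Finset.mem_insert_self σ _),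
      Finset.erase_insert_eq_erase]
    have hqd : q R σ σ = -∑ θ' ∈ (succs R σ).erase σ, qOff R σ θ' := by
      unfold q; rw [if_pos rfl]
    have hqe : ∀ θ ∈ ((succs R σ).filter
        (· ∈ {θ : Multiset S | mlift sd π₀ θ})).erase σ, q R σ θ = qOff R σ θ := by
      intro θ hθ
      have hne := (Finset.mem_erase.1 hθ).1
      unfold q
      rw [if_neg (Ne.symm hne)]
    rw [hqd, Finset.sum_congr rfl hqe, hMeq]
    have hqd' : q (reduced R f) (σ.map f) (σ.map f)
        = -∑ θ' ∈ (succs (reduced R f) (σ.map f)).erase (σ.map f),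
            qOff (reduced R f) (σ.map f) θ' := by
      unfold q; rw [if_pos rfl]
    rw [hqd']
    rw [show ((succs R σ).filter (· ∈ {θ : Multiset S | mlift sd π₀ θ})).erase σ
        = ((succs R σ).erase σ).filter (· ∈ {θ : Multiset S | mlift sd π₀ θ}) from
        (Finset.filter_erase _ σ (succs R σ)).symm]
    have hsplit := Finset.sum_filter_add_sum_filter_not ((succs R σ).erase σ)
      (· ∈ {θ : Multiset S | mlift sd π₀ θ}) (qOff R σ)
    linarith [key, hsplit]
  · -- off-diagonal case
    rw [starA hpos hse hf hσ]
    have hne : ¬ σ.map f = π₀.map f := fun h => hσ ((mlift_iff_map hf _ _).2 h.symm)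
    unfold q
    rw [if_neg hne]

end
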